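/- Let λ be a regular cardinal such that every λ-complete filter on any set extends to an ω₁-complete ultrafilter (λ is L_{ω₁ω}-compact), and let Z be a countable first-order structure. If S is a set of first-order formulas over Z with free variables from a set X such that every subset T ⊆ S with |T| < λ is simultaneously realized by some assignment X → Z, then S itself is simultaneously realized by some assignment X → Z. -/

import Mathlib

universe u

open FirstOrder Language Cardinal

theorem realize_agree_aux {L : FirstOrder.Language} {M : Type*} [L.Structure M] {α : Type*}
    [DecidableEq α] (φ : L.Formula α) {v w : α → M}
    (h : ∀ x ∈ φ.freeVarFinset, v x = w x) :
    φ.Realize v ↔ φ.Realize w := by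
  have hv := FirstOrder.Language.BoundedFormula.realize_restrictFreeVar' (M := M)
    (φ := φ) (s := (↑φ.freeVarFinset : Set α)) Set.Subset.rfl (v := v) (xs := default)
  have hw := FirstOrder.Language.BoundedFormula.realize_restrictFreeVar' (M := M)
    (φ := φ) (s := (↑φ.freeVarFinset : Set α)) Set.Subset.rfl (v := w) (xs := default)
  have hvw : (v ∘ (↑) : (↑φ.freeVarFinset : Set α) → M) = w ∘ (↑) :=
    funext fun x => h x (Finset.mem_coe.mp x.2)
  unfold FirstOrder.Language.Formula.Realize
  rw [← hv, ← hw, hvw]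

/-- Proposition 2.1: if `l` is a regular `L_{ω₁ω}`-compact cardinal (every
`l`-complete proper filter extends to a countably complete ultrafilter) and `Z` is a
countable first-order structure, then a set `S` of formulas in variables from `X` is
realized in `Z` provided every subset of `S` of cardinality `< l` is realized in `Z`. -/
theorem stmt3 {l : Cardinal.{u}} (hreg : l.IsRegular)
    (hcompact : ∀ (I : Type u) (F : Filter I), F.NeBot →
      (∀ s : Set (Set I), Cardinal.mk s < l → (∀ t ∈ s, t ∈ F) → ⋂₀ s ∈ F) →
      ∃ U : Ultrafilter I, (∀ t ∈ F, t ∈ U) ∧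
        ∀ s : Set (Set I), s.Countable → (∀ t ∈ s, t ∈ U) → ⋂₀ s ∈ U)
    {L : FirstOrder.Language.{u, u}} {Z : Type u} [L.Structure Z] [Countable Z]
    {X : Type u} (S : Set (L.Formula X))
    (hsmall : ∀ T ⊆ S, Cardinal.mk T < l → ∃ f : X → Z, ∀ φ ∈ T, φ.Realize f) :
    ∃ f : X → Z, ∀ φ ∈ S, φ.Realize f := by
  classical
  set I : Type u := {T : Set (L.Formula X) // T ⊆ S ∧ Cardinal.mk T < l} with hIdef
  have hpos : (0 : Cardinal) < l := lt_of_lt_of_le aleph0_pos hreg.aleph0_le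
  -- the l-complete filter of "cones"
  let F : Filter I :=
    { sets := {A | ∃ T0 : Set (L.Formula X), T0 ⊆ S ∧ Cardinal.mk T0 < l ∧
        {T : I | T0 ⊆ T.1} ⊆ A}
      univ_sets := ⟨∅, by simp, by simpa using hpos, by simp⟩
      sets_of_superset := by
        rintro A B ⟨T0, h1, h2, h3⟩ hAB
        exact ⟨T0, h1, h2, h3.trans hAB⟩
      inter_sets := by
        rintro A B ⟨T0, h1, h2, h3⟩ ⟨T1, k1, k2, k3⟩
        refine ⟨T0 ∪ T1, Set.union_subset h1 k1,
          (Cardinal.mk_union_le _ _).trans_lt (Cardinal.add_lt_of_lt hreg.aleph0_le h2 k2),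
          fun T hT => ⟨h3 (Set.union_subset_iff.mp hT).1, k3 (Set.union_subset_iff.mp hT).2⟩⟩ }
  have hmemF : ∀ A : Set I, A ∈ F ↔ ∃ T0 : Set (L.Formula X), T0 ⊆ S ∧ Cardinal.mk T0 < l ∧
      {T : I | T0 ⊆ T.1} ⊆ A := fun A => Iff.rfl
  have hFne : F.NeBot := by
    rw [← Filter.forall_mem_nonempty_iff_neBot]
    rintro A ⟨T0, h1, h2, h3⟩
    exact ⟨⟨T0, h1, h2⟩, h3 (by simp [Set.mem_setOf_eq])⟩
  have hFcomplete : ∀ s : Set (Set I), Cardinal.mk s < l → (∀ t ∈ s, t ∈ F) → ⋂₀ s ∈ F := by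
    intro s hs ht
    choose! w hw1 hw2 hw3 using ht
    refine ⟨⋃ t : s, w t, Set.iUnion_subset fun t => hw1 t t.2, ?_, ?_⟩
    · refine (Cardinal.mk_iUnion_le _).trans_lt
        (Cardinal.mul_lt_of_lt hreg.aleph0_le hs ?_)
      exact Cardinal.iSup_lt_of_isRegular hreg hs fun t => hw2 t t.2
    · intro T hT t hts
      exact hw3 t hts (le_trans (Set.subset_iUnion (fun t : s => w t) ⟨t, hts⟩) hT)
  obtain ⟨U, hFU, hUcc⟩ := hcompact I F hFne hFcomplete
  -- choose realizers for each small subset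
  choose g hg using fun T : I => hsmall T.1 T.2.1 T.2.2
  -- define the limit assignment
  have hfx : ∀ x : X, ∃ z : Z, {T : I | g T x = z} ∈ U := by
    intro x
    by_contra hno
    push_neg at hno
    have hcnt : Set.Countable (Set.range fun z : Z => {T : I | g T x = z}ᶜ) :=
      Set.countable_range _
    have hmem : ∀ t ∈ Set.range fun z : Z => {T : I | g T x = z}ᶜ, t ∈ U := by
      rintro t ⟨z, rfl⟩
      exact (Ultrafilter.compl_mem_iff_notMem).mpr (hno z)
    have h0 := hUcc _ hcnt hmem
    have hempty : ⋂₀ (Set.range fun z : Z => {T : I | g T x = z}ᶜ) = ∅ := by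
      ext T
      simp only [Set.mem_sInter, Set.mem_range, Set.mem_empty_iff_false, iff_false, not_forall]
      exact ⟨_, ⟨g T x, rfl⟩, by simp⟩
    rw [hempty] at h0
    exact Ultrafilter.empty_notMem h0
  choose f hf using hfx
  refine ⟨f, fun φ hφ => ?_⟩
  -- the set of T containing φ and agreeing with f on the free variables of φ
  have hA : {T : I | φ ∈ T.1} ∈ U := by
    refine hFU _ ⟨{φ}, by simpa using hφ, ?_, fun T hT => hT rfl⟩
    simpa using Cardinal.one_lt_aleph0.trans_le hreg.aleph0_le
  have hB : (⋂ x ∈ φ.freeVarFinset, {T : I | g T x = f x}) ∈ U :=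
    (Filter.biInter_finset_mem _).mpr fun x _ => hf x
  obtain ⟨T, hT1, hT2⟩ := Ultrafilter.nonempty_of_mem (Filter.inter_mem hA hB)
  have hreal : φ.Realize (g T) := hg T φ hT1
  rw [← realize_agree_aux φ (v := g T) (w := f) ?_]
  · exact hreal
  · intro x hx
    simp only [Set.mem_iInter] at hT2
    exact hT2 x hx
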